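/- arXiv:1811.04966 — 2 statements merged into one kernel-verified Lean document; each statement's English description precedes it below -/
import Mathlib

section
/- Let p be a monic polynomial of degree n over the tropical hyperfield T with p ∈ ∏_{i=1}^n (T + a_i). If q is a polynomial over T with p ∈ (T + a_n)·q, then q ∈ ∏_{i=1}^{n-1} (T + a_i). -/
/-- Hyperaddition of the tropical hyperfield `T = ℝ ∪ {∞}`:
`a ⊞ b = {min a b}` if `a ≠ b`, and `a ⊞ a = {c : a ≤ c}`.  Tropical multiplication is
addition of extended reals. -/
noncomputable def thadd (a b : WithTop ℝ) : Set (WithTop ℝ) :=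
  if a = b then {c | a ≤ c} else {min a b}

/-- The hypersum of a list of elements of the tropical hyperfield, defined recursively. -/
noncomputable def thsum : List (WithTop ℝ) → Set (WithTop ℝ)
  | [] => {⊤}
  | [x] => {x}
  | x :: y :: l => ⋃ b ∈ thsum (y :: l), thadd b x

/-- `TFactors n c a` expresses `p ∈ ∏_{e=0}^{n-1} (T + a_e)` for the monic polynomial
`p = Σ_{i=0}^n c_i T^i` over the tropical hyperfield: for each `i = 1, …, n`,
`c_{n-i}` lies in the hypersum, over all `i`-element subsets `S` of `{0, …, n-1}`, of the
tropical products `∑_{e ∈ S} a_e`. -/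
noncomputable def TFactors (n : ℕ) (c : ℕ → WithTop ℝ) (a : ℕ → WithTop ℝ) : Prop :=
  ∀ i, 1 ≤ i → i ≤ n →
    c (n - i) ∈ thsum ((((Finset.range n).powersetCard i).toList).map
      (fun S => ∑ e ∈ S, a e))

/-- `TDivRel a n c d` expresses `p ∈ (T + a) q` over the tropical hyperfield, where
`p = Σ_{i=0}^n c_i T^i` and `q = Σ_{i=0}^{n-1} d_i T^i` (in `T` every element is its own
hyperadditive inverse, so `T - a` and `T + a` coincide): `c_0 = a·d_0`,
`c_i ∈ a·d_i ⊞ d_{i-1}` for `1 ≤ i ≤ n - 1`, and `c_n = d_{n-1}`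
(tropical multiplication being addition of extended reals). -/
noncomputable def TDivRel (a : WithTop ℝ) (n : ℕ) (c d : ℕ → WithTop ℝ) : Prop :=
  c 0 = a + d 0 ∧
  (∀ i, 1 ≤ i → i ≤ n - 1 → c i ∈ thadd (a + d i) (d (i - 1))) ∧
  c n = d (n - 1)

namespace TropDiv

noncomputable def lmin (L : List (WithTop ℝ)) : WithTop ℝ := L.foldr min ⊤

lemma lmin_nil : lmin [] = ⊤ := rfl

lemma lmin_cons (x : WithTop ℝ) (L : List (WithTop ℝ)) : lmin (x :: L) = min x (lmin L) := rfl

lemma lmin_le {L : List (WithTop ℝ)} {y : WithTop ℝ} (hy : y ∈ L) : lmin L ≤ y := by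
  induction L with
  | nil => simp at hy
  | cons hd tl ih =>
    rcases List.mem_cons.1 hy with h | h
    · simp [lmin_cons, h]
    · exact le_trans (by simp [lmin_cons]) (ih h)

lemma lmin_mem {L : List (WithTop ℝ)} (h : L ≠ []) : lmin L ∈ L := by
  induction L with
  | nil => simp at h
  | cons hd tl ih =>
    rcases eq_or_ne tl [] with rfl | h'
    · simp [lmin_cons, lmin_nil]
    · rw [lmin_cons]
      rcases min_cases hd (lmin tl) with ⟨h1, _⟩ | ⟨h1, _⟩
      · simp [h1]
      · simp [h1, ih h']

noncomputable def tiecount (L : List (WithTop ℝ)) : ℕ := L.countP (fun y => y = lmin L)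

lemma mem_thsum_iff {L : List (WithTop ℝ)} (h : L ≠ []) {x : WithTop ℝ} :
    x ∈ thsum L ↔ lmin L ≤ x ∧ (x = lmin L ∨ 1 < tiecount L) := by
  induction L generalizing x with
  | nil => simp at h
  | cons hd tl ih =>
    rcases eq_or_ne tl [] with rfl | h'
    · show x ∈ thsum [hd] ↔ _
      have hm : lmin [hd] = hd := by simp [lmin_cons, lmin_nil]
      have hcnt : tiecount [hd] = 1 := by
        unfold tiecount
        rw [hm, List.countP_cons, List.countP_nil]
        simp
      simp only [thsum, Set.mem_singleton_iff, hm, hcnt]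
      constructor
      · rintro rfl; simp
      · rintro ⟨h1, h2 | h2⟩
        · exact h2
        · omega
    · -- tl ≠ []
      obtain ⟨y, l, rfl⟩ := List.exists_cons_of_ne_nil h'
      have hch : x ∈ thsum (hd :: y :: l) ↔ ∃ b, b ∈ thsum (y :: l) ∧ x ∈ thadd b hd := by
        show x ∈ ⋃ b ∈ thsum (y :: l), thadd b hd ↔ _
        simp
      set tl := y :: l with htl
      have h' : tl ≠ [] := by simp [htl]
      set m' := lmin tl with hm'
      have hmem' : m' ∈ tl := lmin_mem h'
      have hcnt' : 0 < tl.countP (fun z => z = m') := by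
        rw [List.countP_pos_iff]; exact ⟨m', hmem', by simp⟩
      rw [hch]
      have hthadd : ∀ b, x ∈ thadd b hd ↔ (if b = hd then b ≤ x else x = min b hd) := by
        intro b; unfold thadd; split <;> simp [Set.mem_singleton_iff]
      rcases lt_trichotomy hd m' with hlt | heq | hgt
      · -- hd < m' : min = hd, unique
        have hm : lmin (hd :: tl) = hd := by rw [lmin_cons]; exact min_eq_left hlt.le
        have hcnt : tiecount (hd :: tl) = 1 := by
          unfold tiecount
          rw [hm, List.countP_cons]
          have h0 : tl.countP (fun z => z = hd) = 0 := by
            rw [List.countP_eq_zero]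
            intro z hz hzz
            rw [decide_eq_true_iff] at hzz
            exact absurd (hzz ▸ lmin_le hz) (not_le.2 hlt)
          simp [h0]
        rw [hm, hcnt]
        constructor
        · rintro ⟨b, hb, hbx⟩
          have hbm : m' ≤ b := ((ih h').1 hb).1
          have hbh : b ≠ hd := fun e => absurd (e ▸ hbm) (not_le.2 hlt)
          rw [hthadd, if_neg hbh] at hbx
          have hmin : min b hd = hd := min_eq_right (hlt.le.trans hbm)
          exact ⟨by rw [hbx, hmin], Or.inl (by rw [hbx, hmin])⟩
        · rintro ⟨h1, h2 | h2⟩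
          · refine ⟨m', (ih h').2 ⟨le_refl _, Or.inl rfl⟩, ?_⟩
            have hbh : m' ≠ hd := (ne_of_lt hlt).symm
            rw [hthadd, if_neg hbh, h2]
            exact (min_eq_right hlt.le).symm
          · omega
      · -- hd = m' : min = hd, tie
        have hm : lmin (hd :: tl) = hd := by rw [lmin_cons]; exact min_eq_left heq.le
        have hcnt : 1 < tiecount (hd :: tl) := by
          unfold tiecount
          rw [hm, List.countP_cons]
          have h0 : 0 < tl.countP (fun z => z = hd) := by rw [heq]; exact hcnt'
          have : decide (hd = hd) = true := by simp
          rw [this]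
          simp only [if_true]
          omega
        rw [hm]
        constructor
        · rintro ⟨b, hb, hbx⟩
          have hbm : m' ≤ b := ((ih h').1 hb).1
          refine ⟨?_, Or.inr hcnt⟩
          rw [hthadd] at hbx
          split at hbx
          · rename_i hbhd; calc hd = b := hbhd.symm
              _ ≤ x := hbx
          · rw [hbx, heq]
            exact le_min hbm (le_refl _)
        · rintro ⟨h1, _⟩
          refine ⟨m', (ih h').2 ⟨le_refl _, Or.inl rfl⟩, ?_⟩
          rw [hthadd, if_pos heq.symm, ← heq]; exact h1
      · -- hd > m' : min = m'
        have hm : lmin (hd :: tl) = m' := by rw [lmin_cons]; exact min_eq_right hgt.le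
        have hcnt : tiecount (hd :: tl) = tiecount tl := by
          unfold tiecount
          rw [hm, List.countP_cons, ← hm']
          have hne : ¬ (hd = m') := (ne_of_gt hgt)
          simp [hne]
        rw [hm, hcnt]
        unfold tiecount
        rw [← hm']
        constructor
        · rintro ⟨b, hb, hbx⟩
          obtain ⟨hbm, hbo⟩ := (ih h').1 hb
          rw [hthadd] at hbx
          split at hbx
          · rename_i hbhd
            subst hbhd
            have h1 : m' ≤ x := le_trans hbm hbx
            rcases hbo with hb1 | hb1
            · exact absurd (hb1 ▸ hgt) (lt_irrefl _)
            · exact ⟨h1, Or.inr hb1⟩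
          · rw [hbx]
            refine ⟨le_min hbm hgt.le, ?_⟩
            rcases hbo with hb1 | hb1
            · left; rw [hb1]; exact min_eq_left hgt.le
            · right; exact hb1
        · rintro ⟨h1, h2 | h2⟩
          · refine ⟨m', (ih h').2 ⟨le_refl _, Or.inl rfl⟩, ?_⟩
            have hbh : m' ≠ hd := ne_of_lt hgt
            rw [hthadd, if_neg hbh, h2]
            exact (min_eq_left hgt.le).symm
          · rcases lt_trichotomy x hd with hxd | hxd | hxd
            · refine ⟨x, (ih h').2 ⟨h1, Or.inr h2⟩, ?_⟩
              rw [hthadd, if_neg (ne_of_lt hxd)]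
              exact (min_eq_left hxd.le).symm
            · refine ⟨hd, (ih h').2 ⟨hgt.le, Or.inr h2⟩, ?_⟩
              rw [hthadd, if_pos rfl, hxd]
            · refine ⟨hd, (ih h').2 ⟨hgt.le, Or.inr h2⟩, ?_⟩
              rw [hthadd, if_pos rfl]; exact hxd.le

noncomputable def fS (a : ℕ → WithTop ℝ) (S : Finset ℕ) : WithTop ℝ := ∑ e ∈ S, a e

noncomputable def tmin (a : ℕ → WithTop ℝ) (m j : ℕ) : WithTop ℝ :=
  ((Finset.range m).powersetCard j).inf (fS a)

def Tied (a : ℕ → WithTop ℝ) (m j : ℕ) : Prop :=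
  ∃ S ∈ (Finset.range m).powersetCard j, ∃ T ∈ (Finset.range m).powersetCard j,
    S ≠ T ∧ fS a S = tmin a m j ∧ fS a T = tmin a m j

lemma countP_toList (F : Finset (Finset ℕ)) (p : Finset ℕ → Prop) [DecidablePred p] :
    F.toList.countP (fun S => decide (p S)) = (F.filter p).card := by
  rw [← Multiset.coe_countP, Finset.coe_toList, Finset.card_def, Finset.filter_val,
    Multiset.countP_eq_card_filter]

lemma lmin_map_toList (F : Finset (Finset ℕ)) (f : Finset ℕ → WithTop ℝ) :
    lmin (F.toList.map f) = F.inf f := by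
  apply le_antisymm
  · exact Finset.le_inf fun S hS => lmin_le (List.mem_map_of_mem (f := f) (Finset.mem_toList.2 hS))
  · rcases eq_or_ne (F.toList.map f) [] with he | he
    · rw [he]
      have : F = ∅ := by
        by_contra hne
        obtain ⟨S, hS⟩ := Finset.nonempty_iff_ne_empty.2 hne
        have : f S ∈ F.toList.map f := List.mem_map_of_mem (f := f) (Finset.mem_toList.2 hS)
        rw [he] at this; simp at this
      rw [this]
      show Finset.inf ∅ f ≤ lmin []
      rw [Finset.inf_empty, lmin_nil]
    · obtain ⟨y, hy, hye⟩ := List.mem_map.1 (lmin_mem he)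
      rw [← hye]
      exact Finset.inf_le (Finset.mem_toList.1 hy)

open Classical in
lemma mem_hyp_iff (a : ℕ → WithTop ℝ) (m j : ℕ) (hj : j ≤ m) (x : WithTop ℝ) :
    x ∈ thsum ((((Finset.range m).powersetCard j).toList).map (fun S => ∑ e ∈ S, a e)) ↔
      (tmin a m j ≤ x ∧ (x = tmin a m j ∨ Tied a m j)) := by
  set F := (Finset.range m).powersetCard j with hF
  have hFne : F.Nonempty := by
    rw [hF]
    apply Finset.powersetCard_nonempty.2
    simpa using hj
  have hLne : (F.toList.map (fun S => ∑ e ∈ S, a e)) ≠ [] := by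
    obtain ⟨S, hS⟩ := hFne
    intro he
    have : (∑ e ∈ S, a e) ∈ F.toList.map (fun S => ∑ e ∈ S, a e) :=
      List.mem_map_of_mem (Finset.mem_toList.2 hS)
    rw [he] at this; simp at this
  rw [mem_thsum_iff hLne]
  have hl : lmin (F.toList.map (fun S => ∑ e ∈ S, a e)) = tmin a m j := by
    rw [lmin_map_toList]; rfl
  rw [hl]
  have hc : tiecount (F.toList.map (fun S => ∑ e ∈ S, a e)) =
      (F.filter (fun S => fS a S = tmin a m j)).card := by
    unfold tiecount
    rw [hl, List.countP_map, ← countP_toList F (fun S => fS a S = tmin a m j)]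
    rfl
  rw [hc]
  have ht : 1 < (F.filter (fun S => fS a S = tmin a m j)).card ↔ Tied a m j := by
    rw [Finset.one_lt_card]
    unfold Tied
    constructor
    · rintro ⟨S, hS, T, hT, hST⟩
      rw [Finset.mem_filter] at hS hT
      exact ⟨S, hS.1, T, hT.1, hST, hS.2, hT.2⟩
    · rintro ⟨S, hS, T, hT, hST, h1, h2⟩
      exact ⟨S, Finset.mem_filter.2 ⟨hS, h1⟩, T, Finset.mem_filter.2 ⟨hT, h2⟩, hST⟩
  rw [ht]

variable (a : ℕ → WithTop ℝ)

lemma tmin_zero (m : ℕ) : tmin a m 0 = 0 := by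
  unfold tmin
  rw [Finset.powersetCard_zero, Finset.inf_singleton]
  simp [fS]

lemma tmin_top {m j : ℕ} (h : m < j) : tmin a m j = ⊤ := by
  unfold tmin
  rw [Finset.powersetCard_eq_empty.2 (by simpa using h), Finset.inf_empty]

lemma le_of_tmin_ne_top {m j : ℕ} (h : tmin a m j ≠ ⊤) : j ≤ m := by
  by_contra hc
  exact h (tmin_top a (by omega))

lemma exists_tmin {m j : ℕ} (hj : j ≤ m) :
    ∃ S ∈ (Finset.range m).powersetCard j, fS a S = tmin a m j := by
  have hne : ((Finset.range m).powersetCard j).Nonempty :=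
    Finset.powersetCard_nonempty.2 (by simpa using hj)
  obtain ⟨S, hS, hSe⟩ := Finset.exists_mem_eq_inf _ hne (fS a)
  exact ⟨S, hS, hSe.symm⟩

lemma tmin_le {m j : ℕ} {S : Finset ℕ} (hS : S ∈ (Finset.range m).powersetCard j) :
    tmin a m j ≤ fS a S := Finset.inf_le hS

lemma mem_powersetCard_range {m j : ℕ} {S : Finset ℕ} :
    S ∈ (Finset.range m).powersetCard j ↔ S ⊆ Finset.range m ∧ S.card = j :=
  Finset.mem_powersetCard

lemma inf_const_add (A : WithTop ℝ) (s : Finset (Finset ℕ)) (g : Finset ℕ → WithTop ℝ) :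
    s.inf (fun T => A + g T) = A + s.inf g := by
  induction s using Finset.cons_induction with
  | empty => simp [add_top]
  | cons x s hx ih =>
    rw [Finset.inf_cons, Finset.inf_cons, ih, min_add_add_left]

lemma tmin_succ (m j : ℕ) (hj : 1 ≤ j) :
    tmin a (m + 1) j = min (tmin a m j) (a m + tmin a m (j - 1)) := by
  obtain ⟨j', rfl⟩ : ∃ j', j = j' + 1 := ⟨j - 1, by omega⟩
  have hins : Finset.range (m + 1) = insert m (Finset.range m) := Finset.range_add_one
  have hnm : m ∉ Finset.range m := by simp
  unfold tmin
  rw [hins, Finset.powersetCard_succ_insert hnm, Finset.inf_union, Finset.inf_image]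
  congr 1
  have : ∀ T ∈ (Finset.range m).powersetCard j', (fS a ∘ insert m) T = a m + fS a T := by
    intro T hT
    obtain ⟨hTs, _⟩ := mem_powersetCard_range.1 hT
    have : m ∉ T := fun hm => hnm (hTs hm)
    simp only [Function.comp_apply, fS, Finset.sum_insert this]
  rw [Finset.inf_congr rfl this, inf_const_add]
  norm_num

lemma tmin_ne_top_anti {m j : ℕ} (h : tmin a m (j + 1) ≠ ⊤) : tmin a m j ≠ ⊤ := by
  have hj1 : j + 1 ≤ m := le_of_tmin_ne_top a h
  obtain ⟨S, hS, hSe⟩ := exists_tmin a hj1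
  obtain ⟨hSs, hSc⟩ := mem_powersetCard_range.1 hS
  obtain ⟨T, hTS, hTc⟩ := Finset.exists_subset_card_eq (show j ≤ S.card by omega)
  have hT : T ∈ (Finset.range m).powersetCard j :=
    mem_powersetCard_range.2 ⟨hTS.trans hSs, hTc⟩
  intro hc
  have h1 : fS a T = ⊤ := top_le_iff.1 (hc ▸ tmin_le a hT)
  obtain ⟨e, heT, hetop⟩ := WithTop.sum_eq_top.1 h1
  have : fS a S = ⊤ := WithTop.sum_eq_top.2 ⟨e, hTS heT, hetop⟩
  exact h (hSe ▸ this)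

lemma tmin_ne_top_le {m j k : ℕ} (hk : k ≤ j) (h : tmin a m j ≠ ⊤) : tmin a m k ≠ ⊤ := by
  induction j with
  | zero => have : k = 0 := by omega
            exact this ▸ h
  | succ j ih =>
    rcases Nat.lt_or_ge k (j+1) with hlt | hge
    · exact ih (by omega) (tmin_ne_top_anti a h)
    · have : k = j + 1 := by omega
      exact this ▸ h

lemma exists_mem_not_mem {S T : Finset ℕ} (h : T.card < S.card) : ∃ e ∈ S, e ∉ T :=
  Finset.not_subset.1 (fun hsub => absurd (Finset.card_le_card hsub) (not_le.2 h))

lemma exchange {m p q : ℕ} (hqp : q < p) (hp : p ≤ m) :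
    tmin a m (p - 1) + tmin a m (q + 1) ≤ tmin a m p + tmin a m q := by
  obtain ⟨S, hS, hSe⟩ := exists_tmin a hp
  obtain ⟨T, hT, hTe⟩ := exists_tmin a (show q ≤ m by omega)
  obtain ⟨hSs, hSc⟩ := mem_powersetCard_range.1 hS
  obtain ⟨hTs, hTc⟩ := mem_powersetCard_range.1 hT
  obtain ⟨e, heS, heT⟩ := exists_mem_not_mem (by omega : T.card < S.card)
  have hSe' : S.erase e ∈ (Finset.range m).powersetCard (p - 1) :=
    mem_powersetCard_range.2 ⟨(Finset.erase_subset e S).trans hSs,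
      by rw [Finset.card_erase_of_mem heS, hSc]⟩
  have hTe' : insert e T ∈ (Finset.range m).powersetCard (q + 1) :=
    mem_powersetCard_range.2 ⟨Finset.insert_subset (hSs heS) hTs,
      by rw [Finset.card_insert_of_notMem heT, hTc]⟩
  calc tmin a m (p - 1) + tmin a m (q + 1) ≤ fS a (S.erase e) + fS a (insert e T) :=
        add_le_add (tmin_le a hSe') (tmin_le a hTe')
    _ = (fS a (S.erase e) + a e) + fS a T := by
        rw [fS, fS, Finset.sum_insert heT, add_assoc]
        rfl
    _ = fS a S + fS a T := by rw [fS, Finset.sum_erase_add _ _ heS]; rfl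
    _ = tmin a m p + tmin a m q := by rw [hSe, hTe]

lemma exchange_strict {m j : ℕ} (h1 : 1 ≤ j) (hjm : j + 1 ≤ m)
    (hfin : tmin a m j ≠ ⊤) (hu : ¬ Tied a m j) :
    tmin a m j + tmin a m j < tmin a m (j + 1) + tmin a m (j - 1) := by
  by_contra hc
  push_neg at hc
  obtain ⟨W, hW, hWe⟩ := exists_tmin a hjm
  obtain ⟨U, hU, hUe⟩ := exists_tmin a (show j - 1 ≤ m by omega)
  obtain ⟨hWs, hWc⟩ := mem_powersetCard_range.1 hW
  obtain ⟨hUs, hUc⟩ := mem_powersetCard_range.1 hU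
  obtain ⟨e, heW, heU⟩ := exists_mem_not_mem (by omega : U.card < W.card)
  have hWe' : W.erase e ∈ (Finset.range m).powersetCard j :=
    mem_powersetCard_range.2 ⟨(Finset.erase_subset e W).trans hWs,
      by rw [Finset.card_erase_of_mem heW, hWc]; omega⟩
  have hUe' : insert e U ∈ (Finset.range m).powersetCard j :=
    mem_powersetCard_range.2 ⟨Finset.insert_subset (hWs heW) hUs,
      by rw [Finset.card_insert_of_notMem heU, hUc]; omega⟩
  have hx : tmin a m j ≤ fS a (W.erase e) := tmin_le a hWe'
  have hy : tmin a m j ≤ fS a (insert e U) := tmin_le a hUe'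
  have hsum : fS a (W.erase e) + fS a (insert e U) = tmin a m (j + 1) + tmin a m (j - 1) := by
    rw [← hWe, ← hUe, fS, fS, fS, fS, Finset.sum_insert heU,
      show ∑ x ∈ W.erase e, a x + (a e + ∑ x ∈ U, a x)
        = (∑ x ∈ W.erase e, a x + a e) + ∑ x ∈ U, a x by rw [add_assoc],
      Finset.sum_erase_add _ _ heW]
  have hxy : fS a (W.erase e) + fS a (insert e U) ≤ tmin a m j + tmin a m j :=
    hsum ▸ hc
  have hxe : fS a (W.erase e) = tmin a m j := by
    refine le_antisymm ?_ hx
    have h2 : fS a (W.erase e) + tmin a m j ≤ tmin a m j + tmin a m j :=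
      le_trans (add_le_add_right hy _) hxy
    exact (WithTop.add_le_add_iff_right hfin).1 h2
  have hye : fS a (insert e U) = tmin a m j := by
    refine le_antisymm ?_ hy
    have h2 : tmin a m j + fS a (insert e U) ≤ tmin a m j + tmin a m j :=
      le_trans (add_le_add_left hx _) hxy
    exact (WithTop.add_le_add_iff_left hfin).1 h2
  apply hu
  refine ⟨W.erase e, hWe', insert e U, hUe', ?_, hxe, hye⟩
  intro hEq
  have : e ∈ W.erase e := hEq ▸ Finset.mem_insert_self e U
  exact (Finset.notMem_erase e W) this

lemma erase_subset_range {m : ℕ} {S : Finset ℕ} (hS : S ⊆ Finset.range (m + 1)) :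
    S.erase m ⊆ Finset.range m := by
  intro x hx
  have hxm : x ≠ m := Finset.ne_of_mem_erase hx
  have : x ∈ Finset.range (m + 1) := hS (Finset.mem_of_mem_erase hx)
  simp only [Finset.mem_range] at this ⊢
  omega

lemma untied_step_left {m j : ℕ} (h1 : 1 ≤ j)
    (hstrict : tmin a m j < a m + tmin a m (j - 1)) (hu : ¬ Tied a m j) :
    tmin a (m + 1) j = tmin a m j ∧ ¬ Tied a (m + 1) j := by
  have hdec := tmin_succ a m j h1
  have hmin : tmin a (m + 1) j = tmin a m j := by rw [hdec]; exact min_eq_left hstrict.le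
  refine ⟨hmin, ?_⟩
  rintro ⟨S, hS, T, hT, hST, hSe, hTe⟩
  have key : ∀ U, U ∈ (Finset.range (m + 1)).powersetCard j →
      fS a U = tmin a (m + 1) j → U ∈ (Finset.range m).powersetCard j := by
    intro U hU hUe
    obtain ⟨hUs, hUc⟩ := mem_powersetCard_range.1 hU
    by_cases hmU : m ∈ U
    · exfalso
      have hUer : U.erase m ∈ (Finset.range m).powersetCard (j - 1) :=
        mem_powersetCard_range.2 ⟨erase_subset_range hUs,
          by rw [Finset.card_erase_of_mem hmU, hUc]⟩
      have : fS a U = a m + fS a (U.erase m) := by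
        rw [fS, fS, ← Finset.sum_erase_add _ _ hmU, add_comm]
      have hge : a m + tmin a m (j - 1) ≤ fS a U := by
        rw [this]
        exact add_le_add_right (tmin_le a hUer) _
      rw [hUe, hmin] at hge
      exact absurd hge (not_le.2 hstrict)
    · refine mem_powersetCard_range.2 ⟨?_, hUc⟩
      intro x hx
      have : x ∈ Finset.range (m + 1) := hUs hx
      simp only [Finset.mem_range] at this ⊢
      rcases Nat.lt_or_ge x m with h | h
      · exact h
      · exact absurd (show x = m by omega) (fun e => hmU (e ▸ hx))
  exact hu ⟨S, key S hS hSe, T, key T hT hTe, hST, hmin ▸ hSe, hmin ▸ hTe⟩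

lemma untied_step_right {m j : ℕ}
    (hstrict : a m + tmin a m j < tmin a m (j + 1)) (hu : ¬ Tied a m j) :
    tmin a (m + 1) (j + 1) = a m + tmin a m j ∧ ¬ Tied a (m + 1) (j + 1) := by
  have hdec := tmin_succ a m (j + 1) (by omega)
  simp only [Nat.add_sub_cancel] at hdec
  have hmin : tmin a (m + 1) (j + 1) = a m + tmin a m j := by
    rw [hdec]; exact min_eq_right hstrict.le
  have hamt : a m ≠ ⊤ := by
    intro hc
    rw [hc, top_add] at hstrict
    exact absurd hstrict (not_lt.2 le_top)
  refine ⟨hmin, ?_⟩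
  rintro ⟨S, hS, T, hT, hST, hSe, hTe⟩
  have key : ∀ U, U ∈ (Finset.range (m + 1)).powersetCard (j + 1) →
      fS a U = tmin a (m + 1) (j + 1) →
      m ∈ U ∧ U.erase m ∈ (Finset.range m).powersetCard j ∧ fS a (U.erase m) = tmin a m j := by
    intro U hU hUe
    obtain ⟨hUs, hUc⟩ := mem_powersetCard_range.1 hU
    by_cases hmU : m ∈ U
    · have hUer : U.erase m ∈ (Finset.range m).powersetCard j :=
        mem_powersetCard_range.2 ⟨erase_subset_range hUs,
          by rw [Finset.card_erase_of_mem hmU, hUc]; omega⟩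
      have hsplit : fS a U = a m + fS a (U.erase m) := by
        rw [fS, fS, ← Finset.sum_erase_add _ _ hmU, add_comm]
      have : a m + fS a (U.erase m) = a m + tmin a m j := by
        rw [← hsplit, hUe, hmin]
      exact ⟨hmU, hUer, WithTop.add_left_cancel hamt this⟩
    · exfalso
      have hUr : U ∈ (Finset.range m).powersetCard (j + 1) := by
        refine mem_powersetCard_range.2 ⟨?_, hUc⟩
        intro x hx
        have : x ∈ Finset.range (m + 1) := hUs hx
        simp only [Finset.mem_range] at this ⊢
        rcases Nat.lt_or_ge x m with h | h
        · exact h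
        · exact absurd (show x = m by omega) (fun e => hmU (e ▸ hx))
      have hge : tmin a m (j + 1) ≤ fS a U := tmin_le a hUr
      rw [hUe, hmin] at hge
      exact absurd hge (not_le.2 hstrict)
  obtain ⟨hmS, hSer, hSval⟩ := key S hS hSe
  obtain ⟨hmT, hTer, hTval⟩ := key T hT hTe
  apply hu
  refine ⟨S.erase m, hSer, T.erase m, hTer, ?_, hSval, hTval⟩
  intro hEq
  apply hST
  rw [← Finset.insert_erase hmS, ← Finset.insert_erase hmT, hEq]

lemma thadd_cases {b x z : WithTop ℝ} (h : z ∈ thadd b x) :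
    (b = x ∧ b ≤ z) ∨ (b ≠ x ∧ z = min b x) := by
  unfold thadd at h
  split at h
  · exact Or.inl ⟨by assumption, h⟩
  · exact Or.inr ⟨by assumption, h⟩

lemma wt_h1 {A x y z w : WithTop ℝ} (hA : A ≠ ⊤) (hx : x ≠ ⊤) (hz : z ≠ ⊤) (hw : w ≠ ⊤)
    (h1 : y < A + x) (h2 : x + z ≤ y + w) : z ≤ A + w := by
  have hy : y ≠ ⊤ := ne_top_of_lt h1
  lift A to ℝ using hA
  lift x to ℝ using hx
  lift y to ℝ using hy
  lift z to ℝ using hz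
  lift w to ℝ using hw
  rw [← WithTop.coe_add] at h1 ⊢
  rw [← WithTop.coe_add, ← WithTop.coe_add] at h2
  rw [WithTop.coe_lt_coe] at h1
  rw [WithTop.coe_le_coe] at h2 ⊢
  linarith

lemma wt_h2 {A x y z : WithTop ℝ} (hA : A ≠ ⊤) (hx : x ≠ ⊤) (hy : y ≠ ⊤)
    (h1 : A + x ≤ y) (h2 : y + y ≤ z + x) : A + y ≤ z := by
  rcases eq_or_ne z ⊤ with rfl | hz
  · exact le_top
  lift A to ℝ using hA
  lift x to ℝ using hx
  lift y to ℝ using hy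
  lift z to ℝ using hz
  rw [← WithTop.coe_add] at h1 ⊢
  rw [← WithTop.coe_add, ← WithTop.coe_add] at h2
  rw [WithTop.coe_le_coe] at h1 h2 ⊢
  linarith

lemma wt_h3 {A y z w : WithTop ℝ} (hA : A ≠ ⊤) (hy : y ≠ ⊤) (hw : w ≠ ⊤)
    (h1 : y + y < z + w) (h2 : z ≤ A + y) : y < A + w := by
  have hz : z ≠ ⊤ := by
    intro hc
    rw [hc] at h2
    rcases WithTop.add_eq_top.1 (top_le_iff.1 h2) with h | h
    · exact hA h
    · exact hy h
  lift A to ℝ using hA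
  lift y to ℝ using hy
  lift w to ℝ using hw
  lift z to ℝ using hz
  rw [← WithTop.coe_add, ← WithTop.coe_add] at h1
  rw [← WithTop.coe_add] at h2 ⊢
  rw [WithTop.coe_lt_coe] at h1 ⊢
  rw [WithTop.coe_le_coe] at h2
  linarith

end TropDiv

open TropDiv in
/-- If `p` is a monic polynomial of degree `n ≥ 1` over the tropical hyperfield with
`p ∈ ∏_{e=0}^{n-1} (T + a_e)`, and `q` is a polynomial with `p ∈ (T + a_{n-1})·q`, then
`q ∈ ∏_{e=0}^{n-2} (T + a_e)` (the empty product being interpreted trivially for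
`n = 1`). -/
theorem tropical_division_lemma (n : ℕ) (hn : 1 ≤ n) (c d a : ℕ → WithTop ℝ)
    (hmonic : c n = 0) (hfac : TFactors n c a) (hdiv : TDivRel (a (n - 1)) n c d) :
    TFactors (n - 1) d a := by
  obtain ⟨m, rfl⟩ : ∃ m, n = m + 1 := ⟨n - 1, by omega⟩
  simp only [Nat.add_sub_cancel] at hdiv ⊢
  obtain ⟨Hc0, Hrel, Hcn⟩ := hdiv
  have Hdm : d m = 0 := Hcn.symm.trans hmonic
  have Hc : ∀ j, 1 ≤ j → j ≤ m + 1 →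
      tmin a (m + 1) j ≤ c (m + 1 - j) ∧
        (c (m + 1 - j) = tmin a (m + 1) j ∨ Tied a (m + 1) j) :=
    fun j h1 h2 => (mem_hyp_iff a (m + 1) j h2 _).1 (hfac j h1 h2)
  -- downward lower bound
  have LBdown : ∀ j, j ≤ m →
      (∀ k, 1 ≤ k → k ≤ j → tmin a m k ≤ a m + tmin a m (k - 1)) →
      tmin a m j ≤ d (m - j) := by
    intro j
    induction j with
    | zero =>
      intro _ _
      rw [Nat.sub_zero, Hdm, tmin_zero]
    | succ j ih =>
      intro hj chain
      have ihd : tmin a m j ≤ d (m - j) :=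
        ih (by omega) (fun k hk1 hk2 => chain k hk1 (by omega))
      have hi1 : 1 ≤ m - j := by omega
      have hrel := Hrel (m - j) hi1 (by omega)
      have hc' := (Hc (j + 1) (by omega) (by omega)).1
      rw [show m + 1 - (j + 1) = m - j by omega] at hc'
      have hchain := chain (j + 1) (by omega) le_rfl
      rw [Nat.add_sub_cancel] at hchain
      have hsig : tmin a m (j + 1) ≤ tmin a (m + 1) (j + 1) := by
        rw [tmin_succ a m (j + 1) (by omega), Nat.add_sub_cancel]
        exact le_min le_rfl hchain
      have hci : tmin a m (j + 1) ≤ c (m - j) := le_trans hsig hc'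
      have hAd : tmin a m (j + 1) ≤ a m + d (m - j) :=
        le_trans hchain (add_le_add_right ihd _)
      rw [show m - (j + 1) = m - j - 1 by omega]
      rcases thadd_cases hrel with ⟨heq, _⟩ | ⟨_, hmin⟩
      · rw [← heq]; exact hAd
      · have : tmin a m (j + 1) ≤ min (a m + d (m - j)) (d (m - j - 1)) :=
          hmin ▸ hci
        exact le_trans this (min_le_right _ _)
  -- exact value of d 0 when a m finite
  have d0eq : a m ≠ ⊤ → d 0 = tmin a m m := by
    intro hA
    have h1 := Hc (m + 1) (by omega) le_rfl
    rw [show m + 1 - (m + 1) = 0 by omega] at h1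
    have hnotied : ¬ Tied a (m + 1) (m + 1) := by
      rintro ⟨S, hS, T, hT, hST, _, _⟩
      apply hST
      have hps : (Finset.range (m + 1)).powersetCard (m + 1) = {Finset.range (m + 1)} := by
        have := Finset.powersetCard_self (Finset.range (m + 1))
        rwa [Finset.card_range] at this
      rw [hps, Finset.mem_singleton] at hS hT
      rw [hS, hT]
    have hc0 : c 0 = tmin a (m + 1) (m + 1) := by
      rcases h1.2 with h | h
      · exact h
      · exact absurd h hnotied
    have hsig : tmin a (m + 1) (m + 1) = a m + tmin a m m := by
      rw [tmin_succ a m (m + 1) (by omega), Nat.add_sub_cancel,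
        tmin_top a (by omega : m < m + 1)]
      exact min_eq_right le_top
    apply WithTop.add_left_cancel hA
    rw [← Hc0, hc0, hsig]
  -- upward lower bound
  have LBup : ∀ i, i ≤ m → a m ≠ ⊤ →
      (∀ k, 1 ≤ k → k ≤ i → a m + tmin a m (m - k) ≤ tmin a m (m + 1 - k)) →
      tmin a m (m - i) ≤ d i := by
    intro i
    induction i with
    | zero =>
      intro _ hA _
      rw [Nat.sub_zero, d0eq hA]
    | succ i ih =>
      intro hi hA chain
      have ihd : tmin a m (m - i) ≤ d i :=
        ih (by omega) hA (fun k hk1 hk2 => chain k hk1 (by omega))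
      have hrel := Hrel (i + 1) (by omega) (by omega)
      have hc' := (Hc (m - i) (by omega) (by omega)).1
      rw [show m + 1 - (m - i) = i + 1 by omega] at hc'
      have hchain := chain (i + 1) (by omega) le_rfl
      rw [show m - (i + 1) = m - i - 1 by omega,
        show m + 1 - (i + 1) = m - i by omega] at hchain
      have hsig : a m + tmin a m (m - i - 1) ≤ tmin a (m + 1) (m - i) := by
        rw [tmin_succ a m (m - i) (by omega)]
        exact le_min hchain le_rfl
      have hci : a m + tmin a m (m - i - 1) ≤ c (i + 1) := le_trans hsig hc'
      by_contra hcon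
      push_neg at hcon
      rw [show m - (i + 1) = m - i - 1 by omega] at hcon
      have hlt : a m + d (i + 1) < a m + tmin a m (m - i - 1) :=
        (WithTop.add_lt_add_iff_left hA).2 hcon
      have hdi : a m + tmin a m (m - i - 1) ≤ d i := le_trans hchain ihd
      rcases thadd_cases hrel with ⟨heq, hle⟩ | ⟨_, hmin⟩
      · rw [heq] at hlt
        exact absurd hdi (not_le.2 hlt)
      · have : c (i + 1) ≤ a m + d (i + 1) := hmin ▸ min_le_left _ _
        exact absurd (le_trans hci this) (not_le.2 hlt)
  -- totality
  have TOT : ∀ j, tmin a m (j + 1) < a m + tmin a m j →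
      ∀ k, 1 ≤ k → k ≤ j → tmin a m k ≤ a m + tmin a m (k - 1) := by
    intro j hlt k hk1 hk2
    by_cases hA : a m = ⊤
    · rw [hA, top_add]; exact le_top
    have hfin1 : tmin a m (j + 1) ≠ ⊤ := ne_top_of_lt hlt
    have hjm : j + 1 ≤ m := le_of_tmin_ne_top a hfin1
    have hex := exchange a (show k - 1 < j + 1 by omega) hjm
    rw [Nat.add_sub_cancel, show k - 1 + 1 = k by omega] at hex
    have fj : tmin a m j ≠ ⊤ := tmin_ne_top_anti a hfin1
    have fk : tmin a m k ≠ ⊤ := tmin_ne_top_le a hk2 fj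
    have fk1 : tmin a m (k - 1) ≠ ⊤ := tmin_ne_top_le a (by omega) fj
    exact wt_h1 hA fj fk fk1 hlt hex
  -- closure upward
  have C3 : ∀ k, a m ≠ ⊤ → a m + tmin a m k ≤ tmin a m (k + 1) →
      a m + tmin a m (k + 1) ≤ tmin a m (k + 2) := by
    intro k hA h
    rcases eq_or_ne (tmin a m (k + 2)) ⊤ with htop | htop
    · rw [htop]; exact le_top
    have hk2m : k + 2 ≤ m := le_of_tmin_ne_top a htop
    have fk1 : tmin a m (k + 1) ≠ ⊤ := tmin_ne_top_anti a htop
    have fk : tmin a m k ≠ ⊤ := tmin_ne_top_anti a fk1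
    have hex := exchange a (show k < k + 2 by omega) hk2m
    rw [show k + 2 - 1 = k + 1 by omega] at hex
    exact wt_h2 hA fk fk1 h (by
      calc tmin a m (k + 1) + tmin a m (k + 1) ≤ tmin a m (k + 2) + tmin a m k := hex
      )
  -- combined lower bound
  have LB : ∀ j, j ≤ m → tmin a m j ≤ d (m - j) := by
    intro j hj
    by_cases hA : a m = ⊤
    · exact LBdown j hj (fun k _ _ => by rw [hA, top_add]; exact le_top)
    rcases lt_or_ge (tmin a m (j + 1)) (a m + tmin a m j) with hlt | hle
    · exact LBdown j hj (TOT j hlt)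
    · have chainup : ∀ s, a m + tmin a m (j + s) ≤ tmin a m (j + s + 1) := by
        intro s
        induction s with
        | zero => exact hle
        | succ s ihs =>
          have := C3 (j + s) hA ihs
          rw [show j + s + 2 = j + (s + 1) + 1 by omega, show j + s + 1 = j + (s + 1) by omega] at this
          exact this
      have := LBup (m - j) (by omega) hA (by
        intro k hk1 hk2
        have := chainup (m - k - j)
        rw [show j + (m - k - j) = m - k by omega, show m - k + 1 = m + 1 - k by omega] at this
        exact this)
      rwa [show m - (m - j) = j by omega] at this
  -- exact value in the untied case
  have EQ : ∀ j, 1 ≤ j → j ≤ m → ¬ Tied a m j → d (m - j) = tmin a m j := by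
    intro j h1 hj huntied
    have hlb := LB j hj
    rcases eq_or_ne (tmin a m j) ⊤ with htop | htop
    · rw [htop] at hlb ⊢
      exact top_le_iff.1 hlb
    rcases eq_or_ne j m with heq | hjm
    · -- j = m
      rw [heq] at h1 htop huntied hlb ⊢
      by_cases hA : a m = ⊤
      · have hm1 : 1 ≤ m := h1
        have hrel := Hrel 1 le_rfl (by omega)
        rw [hA, top_add] at hrel
        have hstrict : tmin a m m < a m + tmin a m (m - 1) := by
          rw [hA, top_add]
          exact lt_top_iff_ne_top.2 htop
        obtain ⟨hσ, hσu⟩ := untied_step_left a h1 hstrict huntied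
        have hcm := Hc m h1 (by omega)
        rw [show m + 1 - m = 1 by omega] at hcm
        have hc1e : c 1 = tmin a m m := by
          rcases hcm.2 with h | h
          · rw [h, hσ]
          · exact absurd h hσu
        rcases thadd_cases hrel with ⟨_, hle⟩ | ⟨_, hmin⟩
        · rw [top_le_iff.1 hle] at hc1e
          exact absurd hc1e.symm htop
        · rw [show m - m = 0 by omega]
          rw [min_eq_right (le_top : d 0 ≤ ⊤)] at hmin
          rw [← hmin, hc1e]
      · rw [show m - m = 0 by omega]
        exact d0eq hA
    · -- j < m
      have hjm1 : j + 1 ≤ m := by omega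
      rcases lt_or_ge (a m + tmin a m j) (tmin a m (j + 1)) with hlt2 | hge
      · -- case (ii)
        have hA : a m ≠ ⊤ := by
          intro h
          rw [h, top_add] at hlt2
          exact absurd hlt2 (not_lt.2 le_top)
        obtain ⟨hσ, hσu⟩ := untied_step_right a hlt2 huntied
        have hcj := Hc (j + 1) (by omega) (by omega)
        rw [show m + 1 - (j + 1) = m - j by omega] at hcj
        have hci : c (m - j) = a m + tmin a m j := by
          rcases hcj.2 with h | h
          · rw [h, hσ]
          · exact absurd h hσu
        have hrel := Hrel (m - j) (by omega) (by omega)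
        have hlbd1 : tmin a m (j + 1) ≤ d (m - j - 1) := by
          have := LB (j + 1) hjm1
          rwa [show m - (j + 1) = m - j - 1 by omega] at this
        refine le_antisymm ?_ hlb
        by_contra hcon
        push_neg at hcon
        have hlt3 : a m + tmin a m j < a m + d (m - j) :=
          (WithTop.add_lt_add_iff_left hA).2 hcon
        rcases thadd_cases hrel with ⟨heq, hle⟩ | ⟨_, hmin⟩
        · exact absurd (hle.trans_eq hci) (not_le.2 hlt3)
        · have hlt4 : a m + tmin a m j < min (a m + d (m - j)) (d (m - j - 1)) :=
            lt_min hlt3 (lt_of_lt_of_le hlt2 hlbd1)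
          rw [← hmin, hci] at hlt4
          exact absurd hlt4 (lt_irrefl _)
      · -- case (iii)
        have hstrconc := exchange_strict a h1 hjm1 htop huntied
        have hstrict : tmin a m j < a m + tmin a m (j - 1) := by
          by_cases hA : a m = ⊤
          · rw [hA, top_add]; exact lt_top_iff_ne_top.2 htop
          · have hw : tmin a m (j - 1) ≠ ⊤ := by
              have h9 : tmin a m (j - 1 + 1) ≠ ⊤ := by
                rw [show j - 1 + 1 = j by omega]; exact htop
              exact tmin_ne_top_anti a h9
            exact wt_h3 hA htop hw hstrconc hge
        obtain ⟨hσ, hσu⟩ := untied_step_left a h1 hstrict huntied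
        have hcj := Hc j h1 (by omega)
        have hci : c (m + 1 - j) = tmin a m j := by
          rcases hcj.2 with h | h
          · rw [h, hσ]
          · exact absurd h hσu
        have hrel := Hrel (m + 1 - j) (by omega) (by omega)
        rw [show m + 1 - j - 1 = m - j by omega] at hrel
        have hlbm : tmin a m (j - 1) ≤ d (m + 1 - j) := by
          have := LB (j - 1) (by omega)
          rwa [show m - (j - 1) = m + 1 - j by omega] at this
        have hgt2 : tmin a m j < a m + d (m + 1 - j) :=
          lt_of_lt_of_le hstrict (add_le_add_right hlbm _)
        rcases thadd_cases hrel with ⟨heq, hle⟩ | ⟨_, hmin⟩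
        · exact absurd (hle.trans_eq hci) (not_le.2 hgt2)
        · have hme : min (a m + d (m + 1 - j)) (d (m - j)) = tmin a m j := by
            rw [← hmin, hci]
          rcases min_cases (a m + d (m + 1 - j)) (d (m - j)) with ⟨h5, _⟩ | ⟨h5, _⟩
          · rw [h5] at hme
            exact absurd hme (ne_of_gt hgt2)
          · rw [h5] at hme
            exact hme
  -- final assembly
  intro j h1 hj
  rw [mem_hyp_iff a m j hj]
  refine ⟨LB j hj, ?_⟩
  by_cases ht : Tied a m j
  · exact Or.inr ht
  · exact Or.inl (EQ j h1 hj ht)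
end

section
/- In the polynomial hyperring over the sign hyperfield S, hypermultiplication is not associative: ((T-1)⊡(T-1))⊡(T+1) = {T³ + aT² + bT + 1 : a,b ∈ S}, whereas (T-1)⊡((T-1)⊡(T+1)) = {T³ + aT² + bT + 1 : a = -1 or b = -1}, and these two sets are distinct. -/
/-- Hyperaddition of the sign hyperfield `S = {0, 1, -1}`:
`x ⊞ 0 = {x}`, `1 ⊞ 1 = {1}`, `(-1) ⊞ (-1) = {-1}`, `1 ⊞ (-1) = {0,1,-1}`. -/
def shadd (a b : SignType) : Set SignType :=
  if a = 0 then {b} else if b = 0 then {a} else if a = b then {a} else Set.univ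

/-- The hypersum `⊞_{k=0}^n f k` in the sign hyperfield. -/
def ssum (f : ℕ → SignType) : ℕ → Set SignType
  | 0 => {f 0}
  | n + 1 => ⋃ b ∈ ssum f n, shadd b (f (n + 1))

/-- Polynomials over the sign hyperfield, as coefficient sequences. -/
abbrev SPoly := ℕ → SignType

/-- The hypermultiplication `p ⊡ q` of polynomials over the sign hyperfield:
`p ⊡ q = { Σ e_i T^i : e_i ∈ ⊞_{k+l=i} c_k d_l }`. -/
def pmul (p q : SPoly) : Set SPoly :=
  {e | ∀ i, e i ∈ ssum (fun k => p k * q (i - k)) i}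

/-- Hypermultiplication of a set of polynomials by a polynomial on the right. -/
def pmulSetLeft (P : Set SPoly) (q : SPoly) : Set SPoly := ⋃ p ∈ P, pmul p q

/-- Hypermultiplication of a polynomial by a set of polynomials on the right. -/
def pmulSetRight (p : SPoly) (Q : Set SPoly) : Set SPoly := ⋃ q ∈ Q, pmul p q

/-- The polynomial `T - 1` over `S`. -/
def Tm1 : SPoly := fun i => if i = 0 then -1 else if i = 1 then 1 else 0

/-- The polynomial `T + 1` over `S`. -/
def Tp1 : SPoly := fun i => if i = 0 then 1 else if i = 1 then 1 else 0
lemma ssum_zero (f : ℕ → SignType) (n : ℕ) (h : ∀ k, k ≤ n → f k = 0) :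
    ssum f n = {0} := by
  induction n with
  | zero => simp [ssum, h 0 le_rfl]
  | succ n ih =>
      rw [ssum, ih (fun k hk => h k (hk.trans n.le_succ))]
      simp [shadd, h (n + 1) le_rfl]

lemma tail_mul (p q : SPoly) (a b : ℕ) (hp : ∀ k, a ≤ k → p k = 0)
    (hq : ∀ k, b ≤ k → q k = 0) (i : ℕ) (hi : a + b ≤ i + 1) :
    ∀ k, k ≤ i → p k * q (i - k) = 0 := by
  intro k hk
  rcases le_or_gt a k with h | h
  · rw [hp k h, zero_mul]
  · rw [hq _ (by omega), mul_zero]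

def Pq : SPoly := fun i => if i = 0 then 1 else if i = 1 then -1 else if i = 2 then 1 else 0

def Qc (c : SignType) : SPoly :=
  fun i => if i = 0 then -1 else if i = 1 then c else if i = 2 then 1 else 0

lemma hTm1 : ∀ k, 2 ≤ k → Tm1 k = 0 := by
  intro k hk; simp [Tm1, show k ≠ 0 by omega, show k ≠ 1 by omega]

lemma hTp1 : ∀ k, 2 ≤ k → Tp1 k = 0 := by
  intro k hk; simp [Tp1, show k ≠ 0 by omega, show k ≠ 1 by omega]

lemma hPq : ∀ k, 3 ≤ k → Pq k = 0 := by
  intro k hk; simp [Pq, show k ≠ 0 by omega, show k ≠ 1 by omega, show k ≠ 2 by omega]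

lemma hQc (c : SignType) : ∀ k, 3 ≤ k → Qc c k = 0 := by
  intro k hk; simp [Qc, show k ≠ 0 by omega, show k ≠ 1 by omega, show k ≠ 2 by omega]

lemma L1 : pmul Tm1 Tm1 = {Pq} := by
  ext e
  simp only [pmul, Set.mem_setOf_eq, Set.mem_singleton_iff]
  constructor
  · intro h
    funext i
    match i with
    | 0 => have := h 0; simpa [ssum, shadd, Tm1, Pq] using this
    | 1 => have := h 1; simpa [ssum, shadd, Tm1, Pq] using this
    | 2 => have := h 2; simpa [ssum, shadd, Tm1, Pq] using this
    | (i+3) =>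
        have := h (i+3)
        rw [ssum_zero _ _ (tail_mul Tm1 Tm1 2 2 hTm1 hTm1 _ (by omega))] at this
        simpa [Pq] using this
  · rintro rfl i
    match i with
    | 0 => simp [ssum, shadd, Tm1, Pq]
    | 1 => simp [ssum, shadd, Tm1, Pq]
    | 2 => simp [ssum, shadd, Tm1, Pq]
    | (i+3) =>
        rw [ssum_zero _ _ (tail_mul Tm1 Tm1 2 2 hTm1 hTm1 _ (by omega))]
        simp [Pq]

lemma L2 : pmul Pq Tp1 = {e : SPoly | e 0 = 1 ∧ e 3 = 1 ∧ ∀ i, 4 ≤ i → e i = 0} := by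
  ext e
  simp only [pmul, Set.mem_setOf_eq]
  constructor
  · intro h
    refine ⟨by simpa [ssum, shadd, Pq, Tp1] using h 0,
            by simpa [ssum, shadd, Pq, Tp1] using h 3, fun i hi => ?_⟩
    have := h i
    rw [ssum_zero _ _ (tail_mul Pq Tp1 3 2 hPq hTp1 _ (by omega))] at this
    simpa using this
  · rintro ⟨h0, h3, ht⟩ i
    match i with
    | 0 => simp [ssum, shadd, Pq, Tp1, h0]
    | 1 => simp [ssum, shadd, Pq, Tp1]
    | 2 => simp [ssum, shadd, Pq, Tp1]
    | 3 => simp [ssum, shadd, Pq, Tp1, h3]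
    | (i+4) =>
        rw [ssum_zero _ _ (tail_mul Pq Tp1 3 2 hPq hTp1 _ (by omega))]
        simp [ht (i+4) (by omega)]

lemma L3 : pmul Tm1 Tp1 = Set.range Qc := by
  ext e
  simp only [pmul, Set.mem_setOf_eq, Set.mem_range]
  constructor
  · intro h
    refine ⟨e 1, ?_⟩
    funext i
    match i with
    | 0 => have := h 0; simp [ssum, shadd, Tm1, Tp1] at this; simp [Qc, this]
    | 1 => simp [Qc]
    | 2 => have := h 2; simp [ssum, shadd, Tm1, Tp1] at this; simp [Qc, this]
    | (i+3) =>
        have := h (i+3)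
        rw [ssum_zero _ _ (tail_mul Tm1 Tp1 2 2 hTm1 hTp1 _ (by omega))] at this
        simp at this
        simp [Qc, this]
  · rintro ⟨c, rfl⟩ i
    match i with
    | 0 => simp [ssum, shadd, Tm1, Tp1, Qc]
    | 1 => simp [ssum, shadd, Tm1, Tp1, Qc]
    | 2 => simp [ssum, shadd, Tm1, Tp1, Qc]
    | (i+3) =>
        rw [ssum_zero _ _ (tail_mul Tm1 Tp1 2 2 hTm1 hTp1 _ (by omega))]
        simp [Qc]

lemma L5 : pmulSetRight Tm1 (pmul Tm1 Tp1) =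
    {e : SPoly | (e 0 = 1 ∧ e 3 = 1 ∧ ∀ i, 4 ≤ i → e i = 0) ∧
      (e 2 = -1 ∨ e 1 = -1)} := by
  rw [L3]
  ext e
  simp only [pmulSetRight, Set.mem_iUnion, Set.mem_range, Set.mem_setOf_eq]
  constructor
  · rintro ⟨q, ⟨c, rfl⟩, hc⟩
    simp only [pmul, Set.mem_setOf_eq] at hc
    refine ⟨⟨by simpa [ssum, shadd, Tm1, Qc] using hc 0,
             by simpa [ssum, shadd, Tm1, Qc] using hc 3, fun i hi => ?_⟩, ?_⟩
    · have := hc i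
      rw [ssum_zero _ _ (tail_mul Tm1 (Qc c) 2 3 hTm1 (hQc c) _ (by omega))] at this
      simpa using this
    · cases c with
      | neg => exact Or.inl (by simpa [ssum, shadd, Tm1, Qc] using hc 2)
      | zero => exact Or.inl (by simpa [ssum, shadd, Tm1, Qc] using hc 2)
      | pos => exact Or.inr (by simpa [ssum, shadd, Tm1, Qc] using hc 1)
  · rintro ⟨⟨h0, h3, ht⟩, h2 | h1⟩
    · refine ⟨Qc (-1), ⟨-1, rfl⟩, fun i => ?_⟩
      match i with
      | 0 => simp [ssum, shadd, Tm1, Qc, h0]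
      | 1 => simp [ssum, shadd, Tm1, Qc]
      | 2 => simp [ssum, shadd, Tm1, Qc, h2]
      | 3 => simp [ssum, shadd, Tm1, Qc, h3]
      | (i+4) =>
          rw [ssum_zero _ _ (tail_mul Tm1 (Qc (-1)) 2 3 hTm1 (hQc _) _ (by omega))]
          simp [ht (i+4) (by omega)]
    · refine ⟨Qc 1, ⟨1, rfl⟩, fun i => ?_⟩
      match i with
      | 0 => simp [ssum, shadd, Tm1, Qc, h0]
      | 1 => simp [ssum, shadd, Tm1, Qc, h1]
      | 2 =>
          simp only [ssum, shadd, Tm1, Qc]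
          simp
          exact ⟨e 2, by cases e 2 <;> simp⟩
      | 3 => simp [ssum, shadd, Tm1, Qc, h3]
      | (i+4) =>
          rw [ssum_zero _ _ (tail_mul Tm1 (Qc 1) 2 3 hTm1 (hQc _) _ (by omega))]
          simp [ht (i+4) (by omega)]

lemma L6 : pmulSetLeft (pmul Tm1 Tm1) Tp1 =
    {e : SPoly | e 0 = 1 ∧ e 3 = 1 ∧ ∀ i, 4 ≤ i → e i = 0} := by
  rw [L1, ← L2]
  simp [pmulSetLeft]

/-- Hypermultiplication of polynomials over the sign hyperfield is not associative:
`((T-1) ⊡ (T-1)) ⊡ (T+1) = {T³ + aT² + bT + 1 : a, b ∈ S}`, while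
`(T-1) ⊡ ((T-1) ⊡ (T+1)) = {T³ + aT² + bT + 1 : a = -1 or b = -1}`, and these two sets
are distinct. -/
theorem sign_pmul_not_assoc :
    pmulSetLeft (pmul Tm1 Tm1) Tp1 =
      {e : SPoly | e 0 = 1 ∧ e 3 = 1 ∧ ∀ i, 4 ≤ i → e i = 0} ∧
    pmulSetRight Tm1 (pmul Tm1 Tp1) =
      {e : SPoly | (e 0 = 1 ∧ e 3 = 1 ∧ ∀ i, 4 ≤ i → e i = 0) ∧
        (e 2 = -1 ∨ e 1 = -1)} ∧
    pmulSetLeft (pmul Tm1 Tm1) Tp1 ≠ pmulSetRight Tm1 (pmul Tm1 Tp1) := by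
  refine ⟨L6, L5, ?_⟩
  rw [L6, L5]
  intro h
  set w : SPoly := fun i => if i ≤ 3 then 1 else 0 with hw
  have hmem : w ∈ {e : SPoly | e 0 = 1 ∧ e 3 = 1 ∧ ∀ i, 4 ≤ i → e i = 0} :=
    ⟨rfl, rfl, fun i hi => by simp [hw, show ¬ i ≤ 3 by omega]⟩
  rw [h] at hmem
  rcases hmem.2 with h2 | h1
  · simp [hw] at h2
  · simp [hw] at h1
end
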